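/- Let L be a quasi-local multiplicative lattice (finitely many maximal elements, 1 compact) in which every prime element is a z-element. Then every prime element of L is maximal. -/

import Mathlib

/-- A multiplicative lattice: a complete lattice with an associative, commutative
multiplication distributing over arbitrary joins, with the top element as unit. -/
class MultiplicativeLattice (L : Type*) extends CompleteLattice L, CommMonoid L where
  mul_sSup : ∀ (a : L) (s : Set L), a * sSup s = ⨆ b ∈ s, a * b
  one_eq_top : (1 : L) = ⊤

variable {L : Type*} [MultiplicativeLattice L]

/-- A maximal element: proper, and anything properly above it up to (but not) ⊤ equals it. -/
def IsMaxElt (m : L) : Prop := m ≠ ⊤ ∧ ∀ x : L, m ≤ x → x ≠ ⊤ → m = x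

/-- The set of maximal elements above `a`. -/
def MSet (a : L) : Set L := {m | IsMaxElt m ∧ a ≤ m}

/-- A z-element: `M_a ⊇ M_b` and `b ≤ x` imply `a ≤ x`. -/
def IsZ (x : L) : Prop := ∀ a b : L, MSet b ⊆ MSet a → b ≤ x → a ≤ x

/-- The top element 1 = ⊤ is compact. -/
def OneCompact (L : Type*) [MultiplicativeLattice L] : Prop :=
  ∀ s : Set L, sSup s = ⊤ → ∃ t : Finset L, ↑t ⊆ s ∧ t.sup id = ⊤

/-- The z-closure of an element: meet of all z-elements above it. -/
noncomputable def zCl (a : L) : L := sInf {z : L | IsZ z ∧ a ≤ z}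

/-- A prime element: proper and `x*y ≤ p` implies `x ≤ p` or `y ≤ p`. -/
def IsPrimeElt (p : L) : Prop := p ≠ ⊤ ∧ ∀ x y : L, x * y ≤ p → x ≤ p ∨ y ≤ p

lemma my_mul_le_left (a b : L) : a * b ≤ a := by
  have h1 : a * sSup {b, (⊤ : L)} = ⨆ x ∈ ({b, ⊤} : Set L), a * x :=
    MultiplicativeLattice.mul_sSup a {b, ⊤}
  have h2 : sSup ({b, (⊤ : L)} : Set L) = ⊤ := by simp
  have h3 : (⨆ x ∈ ({b, ⊤} : Set L), a * x) = (a * b) ⊔ (a * ⊤) :=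
    iSup_pair
  have h4 : a * ⊤ = a := by
    rw [← MultiplicativeLattice.one_eq_top, mul_one]
  rw [h2, h4] at h1
  rw [h4] at h3
  rw [h3] at h1
  exact le_of_le_of_eq le_sup_left h1.symm

lemma prod_le_mem (t : Finset L) (m : L) (hm : m ∈ t) : t.prod id ≤ m := by
  classical
  rw [← Finset.mul_prod_erase t id hm]
  exact my_mul_le_left m _

lemma exists_mem_le_of_prod_le (p : L) (hp : IsPrimeElt p) :
    ∀ t : Finset L, t.Nonempty → t.prod id ≤ p → ∃ m ∈ t, m ≤ p := by
  classical
  intro t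
  induction t using Finset.induction_on with
  | empty => intro hne _; exact absurd hne (by simp)
  | @insert b s hb ih =>
    intro _ hle
    rw [Finset.prod_insert hb] at hle
    rcases hp.2 _ _ hle with hbp | hs
    · exact ⟨b, Finset.mem_insert_self _ _, hbp⟩
    · rcases s.eq_empty_or_nonempty with rfl | hsne
      · rw [Finset.prod_empty, MultiplicativeLattice.one_eq_top] at hs
        exact absurd (le_antisymm le_top hs) hp.1
      · obtain ⟨m, hm, hmp⟩ := ih hsne hs
        exact ⟨m, Finset.mem_insert_of_mem hm, hmp⟩

/-- Every proper element is below a maximal element, given 1 compact. -/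
lemma exists_max_above (h : OneCompact L) (p : L) (hp : p ≠ ⊤) :
    ∃ m : L, IsMaxElt m ∧ p ≤ m := by
  obtain ⟨m, hpm, hmax⟩ :
      ∃ m, p ≤ m ∧ Maximal (· ∈ {x : L | x ≠ ⊤}) m := by
    apply zorn_le_nonempty₀ {x : L | x ≠ ⊤} ?_ p hp
    · intro c hcsub hchain y hyc
      refine ⟨sSup c, ?_, fun z hz => le_sSup hz⟩
      intro htop
      obtain ⟨t, hts, htsup⟩ := h c htop
      rcases t.eq_empty_or_nonempty with rfl | htne
      · rw [Finset.sup_empty] at htsup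
        exact hp (le_antisymm le_top (le_of_eq_of_le htsup.symm bot_le))
      · obtain ⟨mx, hmx, hmxmax⟩ :=
          (by obtain ⟨a, ha, hm⟩ := (t : Set L).toFinite.exists_maximalFor id _ (Finset.coe_nonempty.2 htne); exact ⟨a, ha, fun x hx hle => le_antisymm hle (hm hx hle)⟩ : ∃ a ∈ (t : Set L), ∀ x ∈ (t : Set L), a ≤ x → a = x)
        have hub : ∀ x ∈ t, x ≤ mx := by
          intro x hx
          rcases hchain.total (hts hmx) (hts hx) with hle | hle
          · exact (hmxmax x hx hle).ge
          · exact hle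
        have : t.sup id ≤ mx := Finset.sup_le hub
        exact hcsub (hts hmx) (le_antisymm le_top (htsup ▸ this))
  exact ⟨m, ⟨hmax.1, fun x hmx hx => le_antisymm hmx (hmax.2 hx hmx)⟩, hpm⟩

theorem stmt11 (h : OneCompact L)
    (hfin : {m : L | IsMaxElt m}.Finite) (hne : {m : L | IsMaxElt m}.Nonempty)
    (hpz : ∀ p : L, IsPrimeElt p → IsZ p)
    (p : L) (hp : IsPrimeElt p) : IsMaxElt p := by
  -- p equals the meet of the maximal elements above it
  have hz := hpz p hp
  have hinf : sInf (MSet p) ≤ p := by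
    apply hz (sInf (MSet p)) p _ le_rfl
    intro m hm
    exact ⟨hm.1, sInf_le hm⟩
  -- MSet p is finite and nonempty
  have hMfin : (MSet p).Finite := hfin.subset (fun m hm => hm.1)
  obtain ⟨m0, hm0⟩ := exists_max_above h p hp.1
  have hMne : (MSet p).Nonempty := ⟨m0, hm0.1, hm0.2⟩
  set F : Finset L := hMfin.toFinset with hF
  have hFne : F.Nonempty := by
    rw [hF, Set.Finite.toFinset_nonempty]; exact hMne
  -- product of all maximal elements above p is ≤ p
  have hprod : F.prod id ≤ p := by
    refine le_trans (le_sInf ?_) hinf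
    intro m hm
    exact prod_le_mem F m (by rw [hF, Set.Finite.mem_toFinset]; exact hm)
  obtain ⟨m, hmF, hmp⟩ := exists_mem_le_of_prod_le p hp F hFne hprod
  have hmM : m ∈ MSet p := by rwa [hF, Set.Finite.mem_toFinset] at hmF
  have : p = m := le_antisymm hmM.2 hmp
  rw [this]
  exact hmM.1
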